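/- Second Raabe's Test (convergence part): Let (a_n) be positive. If liminf_{n→∞} ln(n)·(1/2 − a_{2n}/a_n) > (ln 2)/2 and liminf_{n→∞} ln(n)·(1/2 − a_{2n+1}/a_n) > (ln 2)/2, then ∑ a_n converges. -/

import Mathlib

open Filter Topology

private lemma ev_lt_of_lt_liminf {u : ℕ → ℝ} {b : ℝ} (hb : 0 < b)
    (h : b < Filter.liminf u Filter.atTop) : ∀ᶠ n in Filter.atTop, b < u n := by
  rw [Filter.liminf_eq] at h
  by_cases hne : {a : ℝ | ∀ᶠ n in Filter.atTop, a ≤ u n}.Nonempty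
  · obtain ⟨c0, hc0, hbc⟩ := exists_lt_of_lt_csSup hne h
    exact hc0.mono fun x hx => lt_of_lt_of_le hbc hx
  · exfalso
    rw [Set.not_nonempty_iff_eq_empty.mp hne, Real.sSup_empty] at h
    linarith

private lemma sum_double (f : ℕ → ℝ) (a : ℕ) : ∀ b,
    ∑ n ∈ Finset.Ico a b, (f (2*n) + f (2*n+1)) = ∑ n ∈ Finset.Ico (2*a) (2*b), f n := by
  intro b
  induction b with
  | zero =>
    rw [Finset.Ico_eq_empty (by omega), Finset.Ico_eq_empty (by omega)]
    simp
  | succ b ih =>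
    rcases le_or_gt a b with hab | hab
    · rw [Finset.sum_Ico_succ_top hab, ih,
        show 2*(b+1) = (2*b+1)+1 by ring,
        Finset.sum_Ico_succ_top (by omega : 2*a ≤ 2*b+1),
        Finset.sum_Ico_succ_top (by omega : 2*a ≤ 2*b)]
      ring
    · rw [Finset.Ico_eq_empty (by omega), Finset.Ico_eq_empty (by omega)]
      simp

private lemma sum_blocks (a : ℕ → ℝ) : ∀ M,
    ∑ k ∈ Finset.range M, (∑ n ∈ Finset.Ico (2^k) (2^(k+1)), a n)
      = ∑ n ∈ Finset.Ico 1 (2^M), a n := by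
  intro M
  induction M with
  | zero => simp
  | succ M ih =>
    rw [Finset.sum_range_succ, ih]
    exact Finset.sum_Ico_consecutive _ Nat.one_le_two_pow
      (Nat.pow_le_pow_right (by norm_num) (Nat.le_succ M))

set_option maxHeartbeats 1000000 in
theorem second_raabe_convergence (a : ℕ → ℝ)
    (ha : ∀ n, 1 ≤ n → 0 < a n)
    (h1 : Real.log 2 / 2 <
      Filter.liminf (fun n : ℕ => Real.log n * (1 / 2 - a (2 * n) / a n)) Filter.atTop)
    (h2 : Real.log 2 / 2 <
      Filter.liminf (fun n : ℕ => Real.log n * (1 / 2 - a (2 * n + 1) / a n)) Filter.atTop) :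
    Summable a := by
  set L1 := Filter.liminf (fun n : ℕ => Real.log n * (1 / 2 - a (2 * n) / a n)) Filter.atTop
  set L2 := Filter.liminf (fun n : ℕ => Real.log n * (1 / 2 - a (2 * n + 1) / a n)) Filter.atTop
  have hlog2 : 0 < Real.log 2 := Real.log_pos one_lt_two
  set c : ℝ := (Real.log 2 / 2 + min L1 L2) / 2 with hcdef
  have hmin : Real.log 2 / 2 < min L1 L2 := lt_min h1 h2
  have hc1 : Real.log 2 / 2 < c := by rw [hcdef]; linarith
  have hc0 : 0 < c := by linarith
  have hcl1 : c < L1 := by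
    have := min_le_left L1 L2; rw [hcdef]; linarith
  have hcl2 : c < L2 := by
    have := min_le_right L1 L2; rw [hcdef]; linarith
  obtain ⟨N, hN⟩ := Filter.eventually_atTop.mp
    ((ev_lt_of_lt_liminf hc0 hcl1).and (ev_lt_of_lt_liminf hc0 hcl2))
  -- basic pointwise bound
  have key : ∀ n : ℕ, N ≤ n → 2 ≤ n →
      a (2*n) + a (2*n+1) ≤ a n * (1 - 2*c / Real.log n) := by
    intro n hn h2n
    have hn1 : (1:ℝ) < (n:ℝ) := by exact_mod_cast h2n
    have hlogn : 0 < Real.log n := Real.log_pos hn1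
    have han : 0 < a n := ha n (by omega)
    obtain ⟨k1, k2⟩ := hN n hn
    have b1 : a (2*n) < (1/2 - c/Real.log n) * a n := by
      rw [← div_lt_iff₀ han]
      have h' : c / Real.log n < 1/2 - a (2*n)/a n := by
        rw [div_lt_iff₀ hlogn]
        have := mul_comm (Real.log n) (1/2 - a (2*n)/a n)
        linarith
      linarith
    have b2 : a (2*n+1) < (1/2 - c/Real.log n) * a n := by
      rw [← div_lt_iff₀ han]
      have h' : c / Real.log n < 1/2 - a (2*n+1)/a n := by
        rw [div_lt_iff₀ hlogn]
        have := mul_comm (Real.log n) (1/2 - a (2*n+1)/a n)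
        linarith
      linarith
    have : (1/2 - c/Real.log n) * a n + (1/2 - c/Real.log n) * a n
        = a n * (1 - 2*c/Real.log n) := by ring
    linarith
  set θ : ℝ := 2*c / Real.log 2 with hθdef
  have hθ : 1 < θ := by rw [hθdef, lt_div_iff₀ hlog2]; linarith
  set θ' : ℝ := (1 + θ) / 2 with hθ'def
  have hθ'1 : 1 < θ' := by rw [hθ'def]; linarith
  have hθ'θ : θ' < θ := by rw [hθ'def]; linarith
  set K : ℕ := max N 2 with hKdef
  have hK1 : 1 ≤ K := le_trans (by norm_num) (le_max_right N 2)
  have h2K : max N 2 ≤ 2^K := (Nat.lt_two_pow_self (n := K)).le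
  set S : ℕ → ℝ := fun k => ∑ n ∈ Finset.Ico (2^k) (2^(k+1)), a n with hSdef
  have hSnonneg : ∀ k, 0 ≤ S k := by
    intro k
    apply Finset.sum_nonneg
    intro i hi
    have := (Finset.mem_Ico.mp hi).1
    exact (ha i (le_trans Nat.one_le_two_pow this)).le
  -- block pointwise bound
  have key2 : ∀ k, K ≤ k → ∀ n ∈ Finset.Ico (2^k) (2^(k+1)),
      a (2*n) + a (2*n+1) ≤ a n * (1 - θ/((k:ℝ)+1)) := by
    intro k hk n hn
    rw [Finset.mem_Ico] at hn
    have hKn : max N 2 ≤ n :=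
      le_trans h2K (le_trans (Nat.pow_le_pow_right (by norm_num) hk) hn.1)
    have h2n : 2 ≤ n := le_trans (le_max_right N 2) hKn
    have hn1 : (1:ℝ) < (n:ℝ) := by exact_mod_cast h2n
    have hlogn : 0 < Real.log n := Real.log_pos hn1
    have key1 := key n (le_trans (le_max_left N 2) hKn) h2n
    have hub : Real.log n ≤ ((k:ℝ)+1) * Real.log 2 := by
      have hn2 : (n:ℝ) ≤ (2:ℝ)^(k+1) := by
        have := hn.2.le
        exact_mod_cast this
      calc Real.log n ≤ Real.log ((2:ℝ)^(k+1)) :=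
            Real.log_le_log (by linarith) hn2
        _ = ((k:ℝ)+1) * Real.log 2 := by rw [Real.log_pow]; push_cast; ring
    have h5 : θ / ((k:ℝ)+1) ≤ 2*c / Real.log n := by
      rw [hθdef, div_div]
      apply div_le_div_of_nonneg_left (by linarith) hlogn
      calc Real.log n ≤ ((k:ℝ)+1) * Real.log 2 := hub
        _ = Real.log 2 * ((k:ℝ)+1) := by ring
    have han : 0 < a n := ha n (by omega)
    calc a (2*n) + a (2*n+1) ≤ a n * (1 - 2*c / Real.log n) := key1
      _ ≤ a n * (1 - θ/((k:ℝ)+1)) := by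
          apply mul_le_mul_of_nonneg_left _ han.le
          linarith
  -- recursion for block sums
  have hrec : ∀ k, K ≤ k → S (k+1) ≤ (1 - θ/((k:ℝ)+1)) * S k := by
    intro k hk
    have e : ∑ n ∈ Finset.Ico (2^k) (2^(k+1)), (a (2*n) + a (2*n+1)) = S (k+1) := by
      rw [sum_double, hSdef]
      congr 1 <;> ring
    calc S (k+1) = ∑ n ∈ Finset.Ico (2^k) (2^(k+1)), (a (2*n) + a (2*n+1)) := e.symm
      _ ≤ ∑ n ∈ Finset.Ico (2^k) (2^(k+1)), a n * (1 - θ/((k:ℝ)+1)) :=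
          Finset.sum_le_sum (key2 k hk)
      _ = (1 - θ/((k:ℝ)+1)) * S k := by rw [← Finset.sum_mul, mul_comm]
  -- antitone weighted sequence
  have mono : ∀ k, K ≤ k → S (k+1) * ((k:ℝ)+1)^θ' ≤ S k * (k:ℝ)^θ' := by
    intro k hk
    have hk1 : (1:ℝ) ≤ (k:ℝ) := by exact_mod_cast le_trans hK1 hk
    have hkpos : (0:ℝ) < (k:ℝ)+1 := by linarith
    have hb : (1 - θ/((k:ℝ)+1)) ≤ ((k:ℝ)/((k:ℝ)+1)) ^ θ' := by
      have hs : (-1:ℝ) ≤ -(1/((k:ℝ)+1)) := by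
        have : 1/((k:ℝ)+1) ≤ 1 := by rw [div_le_one hkpos]; linarith
        linarith
      have hber := one_add_mul_self_le_rpow_one_add hs hθ'1.le
      have e1 : (1:ℝ) + -(1/((k:ℝ)+1)) = (k:ℝ)/((k:ℝ)+1) := by field_simp; ring
      rw [e1] at hber
      have e2 : 1 + θ' * -(1/((k:ℝ)+1)) = 1 - θ'/((k:ℝ)+1) := by ring
      rw [e2] at hber
      have h6 : θ'/((k:ℝ)+1) ≤ θ/((k:ℝ)+1) :=
        (div_le_div_iff_of_pos_right hkpos).mpr hθ'θ.le
      linarith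
    calc S (k+1) * ((k:ℝ)+1)^θ'
        ≤ ((1 - θ/((k:ℝ)+1)) * S k) * ((k:ℝ)+1)^θ' :=
          mul_le_mul_of_nonneg_right (hrec k hk) (Real.rpow_nonneg (by linarith) _)
      _ ≤ (((k:ℝ)/((k:ℝ)+1))^θ' * S k) * ((k:ℝ)+1)^θ' :=
          mul_le_mul_of_nonneg_right
            (mul_le_mul_of_nonneg_right hb (hSnonneg k)) (Real.rpow_nonneg (by linarith) _)
      _ = S k * (((k:ℝ)/((k:ℝ)+1))^θ' * (((k:ℝ)+1))^θ') := by ring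
      _ = S k * (k:ℝ)^θ' := by
          rw [← Real.mul_rpow (by positivity) (by linarith),
            div_mul_cancel₀ _ (by linarith : ((k:ℝ)+1) ≠ 0)]
  have desc : ∀ k, K ≤ k → S k * (k:ℝ)^θ' ≤ S K * (K:ℝ)^θ' := by
    intro k hk
    induction k, hk using Nat.le_induction with
    | base => exact le_rfl
    | succ k hk ih =>
      have := mono k hk
      calc S (k+1) * ((k+1:ℕ):ℝ)^θ' = S (k+1) * ((k:ℝ)+1)^θ' := by push_cast; ring_nf
        _ ≤ S k * (k:ℝ)^θ' := mono k hk
        _ ≤ S K * (K:ℝ)^θ' := ih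
  have hle : ∀ k, K ≤ k → S k ≤ (S K * (K:ℝ)^θ') * (1/(k:ℝ)^θ') := by
    intro k hk
    have hk0 : (0:ℝ) < (k:ℝ) := by exact_mod_cast lt_of_lt_of_le (by omega : 0 < K) hk
    have hkpos : (0:ℝ) < (k:ℝ)^θ' := Real.rpow_pos_of_pos hk0 _
    rw [mul_one_div, le_div_iff₀ hkpos]
    exact desc k hk
  have hbig : Summable (fun n : ℕ => (S K * (K:ℝ)^θ') * (1 / (n:ℝ)^θ')) :=
    (Real.summable_one_div_nat_rpow.mpr hθ'1).mul_left _
  have hbig2 : Summable (fun j : ℕ => (S K * (K:ℝ)^θ') * (1 / ((j + K : ℕ):ℝ)^θ')) :=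
    (summable_nat_add_iff K).mpr hbig
  have hsum : Summable (fun j : ℕ => S (j + K)) :=
    Summable.of_nonneg_of_le (fun j => hSnonneg _)
      (fun j => hle (j + K) (Nat.le_add_left K j)) hbig2
  have hS : Summable S := (summable_nat_add_iff K).mp hsum
  set T : ℝ := ∑' k, S k with hTdef
  have hpartial : ∀ M, ∑ k ∈ Finset.range M, S k ≤ T :=
    fun M => Summable.sum_le_tsum _ (fun i _ => hSnonneg i) hS
  have hshift : Summable (fun n => a (n+1)) := by
    apply summable_of_sum_range_le (c := T) (fun n => (ha (n+1) (Nat.le_add_left 1 n)).le)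
    intro m
    have e : ∑ i ∈ Finset.range m, a (i+1) = ∑ n ∈ Finset.Ico 1 (m+1), a n := by
      rw [Finset.sum_Ico_eq_sum_range]
      simp only [Nat.add_sub_cancel]
      exact Finset.sum_congr rfl (fun i _ => by rw [Nat.add_comm])
    rw [e]
    have hsub : Finset.Ico 1 (m+1) ⊆ Finset.Ico 1 (2^(m+1)) :=
      Finset.Ico_subset_Ico le_rfl (Nat.lt_two_pow_self (n := m+1)).le
    calc ∑ n ∈ Finset.Ico 1 (m+1), a n
        ≤ ∑ n ∈ Finset.Ico 1 (2^(m+1)), a n :=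
          Finset.sum_le_sum_of_subset_of_nonneg hsub
            (fun i hi _ => (ha i (Finset.mem_Ico.mp hi).1).le)
      _ = ∑ k ∈ Finset.range (m+1), S k := (sum_blocks a (m+1)).symm
      _ ≤ T := hpartial (m+1)
  exact (summable_nat_add_iff 1).mp hshift
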